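/- Fix g ∈ ℝ^n, c > 0 and λ > 0, and consider the function ψ(u) = (c/2)‖u − g‖² + λ·sign(‖u‖) on ℝ^n (where sign(‖u‖) = 0 if u = 0 and 1 otherwise). Then the set of global minimizers of ψ is: {g} if ‖g‖ > √(2λ/c); {0} if ‖g‖ < √(2λ/c); and {0, g} if ‖g‖ = √(2λ/c). -/
import Mathlib


open Filter Topology
open scoped Classical

/-- `ψ(u) = (c/2)‖u − g‖² + λ·sign(‖u‖)`, where `sign(‖u‖) = 0` if `u = 0` and `1` otherwise. -/
noncomputable def psi {n : ℕ} (g : EuclideanSpace ℝ (Fin n)) (c lam : ℝ)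
    (u : EuclideanSpace ℝ (Fin n)) : ℝ :=
  c / 2 * ‖u - g‖ ^ 2 + lam * (if u = 0 then 0 else 1)

/-- the set of global minimizers of `ψ` is `{g}` if `‖g‖ > √(2λ/c)`,
`{0}` if `‖g‖ < √(2λ/c)`, and `{0, g}` if `‖g‖ = √(2λ/c)`. -/
theorem minimizers_of_scalar_prox {n : ℕ} (g : EuclideanSpace ℝ (Fin n)) (c lam : ℝ)
    (hc : 0 < c) (hlam : 0 < lam) :
    (‖g‖ > Real.sqrt (2 * lam / c) →
      {u : EuclideanSpace ℝ (Fin n) | ∀ u', psi g c lam u ≤ psi g c lam u'} = {g}) ∧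
    (‖g‖ < Real.sqrt (2 * lam / c) →
      {u : EuclideanSpace ℝ (Fin n) | ∀ u', psi g c lam u ≤ psi g c lam u'} = {0}) ∧
    (‖g‖ = Real.sqrt (2 * lam / c) →
      {u : EuclideanSpace ℝ (Fin n) | ∀ u', psi g c lam u ≤ psi g c lam u'} = {0, g}) := by
  have hsq : Real.sqrt (2 * lam / c) ^ 2 = 2 * lam / c := Real.sq_sqrt (by positivity)
  have hspos : 0 < Real.sqrt (2 * lam / c) := Real.sqrt_pos.mpr (by positivity)
  have psi0 : psi g c lam 0 = c / 2 * ‖g‖ ^ 2 := by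
    simp [psi]
  have psine : ∀ u : EuclideanSpace ℝ (Fin n), u ≠ 0 →
      psi g c lam u = c / 2 * ‖u - g‖ ^ 2 + lam := by
    intro u hu; simp [psi, hu]
  have psig : g ≠ 0 → psi g c lam g = lam := by
    intro hg; simp [psi, hg]
  refine ⟨?_, ?_, ?_⟩
  · intro h
    have hg : g ≠ 0 := by
      intro hg0; rw [hg0, norm_zero] at h; exact absurd h (not_lt.mpr hspos.le)
    have h2 : 2 * lam / c < ‖g‖ ^ 2 := by
      calc 2 * lam / c = Real.sqrt (2 * lam / c) ^ 2 := hsq.symm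
        _ < ‖g‖ ^ 2 := by
          apply pow_lt_pow_left₀ h (Real.sqrt_nonneg _) (by norm_num)
    have hA : lam < c / 2 * ‖g‖ ^ 2 := by
      rw [div_lt_iff₀ hc] at h2; nlinarith
    ext u
    simp only [Set.mem_setOf_eq, Set.mem_singleton_iff]
    constructor
    · intro hu
      by_contra hne
      by_cases hu0 : u = 0
      · have := hu g
        rw [hu0, psi0, psig hg] at this
        linarith
      · have := hu g
        rw [psine u hu0, psig hg] at this
        have hnn : 0 ≤ c / 2 * ‖u - g‖ ^ 2 := by positivity
        have : c / 2 * ‖u - g‖ ^ 2 = 0 := by linarith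
        have : ‖u - g‖ = 0 := by
          have := (mul_eq_zero.mp this).resolve_left (by positivity)
          exact pow_eq_zero_iff (by norm_num) |>.mp this
        exact hne (sub_eq_zero.mp (norm_eq_zero.mp this))
    · rintro rfl u'
      rw [psig hg]
      by_cases hu0 : u' = 0
      · rw [hu0, psi0]; linarith
      · rw [psine u' hu0, le_add_iff_nonneg_left]; positivity
  · intro h
    have h2 : ‖g‖ ^ 2 < 2 * lam / c := by
      calc ‖g‖ ^ 2 < Real.sqrt (2 * lam / c) ^ 2 :=
            pow_lt_pow_left₀ h (norm_nonneg _) (by norm_num)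
        _ = 2 * lam / c := hsq
    have hA : c / 2 * ‖g‖ ^ 2 < lam := by
      rw [lt_div_iff₀ hc] at h2; nlinarith
    ext u
    simp only [Set.mem_setOf_eq, Set.mem_singleton_iff]
    constructor
    · intro hu
      by_contra hne
      have := hu 0
      rw [psi0, psine u hne] at this
      nlinarith [sq_nonneg ‖u - g‖]
    · rintro rfl u'
      rw [psi0]
      by_cases hu0 : u' = 0
      · rw [hu0, psi0]
      · rw [psine u' hu0]
        nlinarith [sq_nonneg ‖u' - g‖]
  · intro h
    have hg : g ≠ 0 := by
      intro hg0; rw [hg0, norm_zero] at h; exact absurd h.symm hspos.ne'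
    have h2 : ‖g‖ ^ 2 = 2 * lam / c := by rw [h, hsq]
    have hA : c / 2 * ‖g‖ ^ 2 = lam := by
      field_simp at h2 ⊢; nlinarith
    ext u
    simp only [Set.mem_setOf_eq, Set.mem_insert_iff, Set.mem_singleton_iff]
    constructor
    · intro hu
      by_cases hu0 : u = 0
      · exact Or.inl hu0
      · right
        have := hu g
        rw [psine u hu0, psig hg] at this
        have hnn : 0 ≤ c / 2 * ‖u - g‖ ^ 2 := by positivity
        have : c / 2 * ‖u - g‖ ^ 2 = 0 := by linarith
        have : ‖u - g‖ = 0 := by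
          have := (mul_eq_zero.mp this).resolve_left (by positivity)
          exact pow_eq_zero_iff (by norm_num) |>.mp this
        exact sub_eq_zero.mp (norm_eq_zero.mp this)
    · rintro (rfl | rfl) <;> intro u'
      · rw [psi0, hA]
        by_cases hu0 : u' = 0
        · rw [hu0, psi0, hA]
        · rw [psine u' hu0]; nlinarith [sq_nonneg ‖u' - g‖]
      · rw [psig hg]
        by_cases hu0 : u' = 0
        · rw [hu0, psi0, hA]
        · rw [psine u' hu0, le_add_iff_nonneg_left]; positivity
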